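/- If A is a strongly connected almost-group automaton, then its factor automaton by the stability relation is a strongly connected group automaton (every letter acts as a permutation of the stability classes). -/

import Mathlib

def Stable {Q A : Type*} (δ : Q → A → Q) (p q : Q) : Prop :=
  ∀ u : List A, ∃ v : List A, (u ++ v).foldl δ p = (u ++ v).foldl δ q

section Scaffold

variable {Q A : Type*} (δ : Q → A → Q)

lemma stable_refl (p : Q) : Stable δ p p := fun _ => ⟨[], rfl⟩

lemma stable_symm {p q : Q} (h : Stable δ p q) : Stable δ q p := by
  intro u
  obtain ⟨v, hv⟩ := h u
  exact ⟨v, hv.symm⟩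

lemma foldl_app (u v : List A) (p : Q) :
    (u ++ v).foldl δ p = v.foldl δ (u.foldl δ p) := List.foldl_append ..

lemma stable_trans {p q r : Q} (h1 : Stable δ p q) (h2 : Stable δ q r) :
    Stable δ p r := by
  intro u
  obtain ⟨v, hv⟩ := h1 u
  obtain ⟨w, hw⟩ := h2 (u ++ v)
  refine ⟨v ++ w, ?_⟩
  have e1 : u ++ (v ++ w) = (u ++ v) ++ w := by simp
  rw [e1, foldl_app δ (u ++ v) w, hv, ← foldl_app δ (u ++ v) w]
  exact hw

lemma stable_cancel {p q p' q' : Q} (rep : List A)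
    (hp : rep.foldl δ p' = p) (hq : rep.foldl δ q' = q)
    (h : Stable δ p' q') : Stable δ p q := by
  intro u
  obtain ⟨v, hv⟩ := h (rep ++ u)
  refine ⟨v, ?_⟩
  have e : ∀ x : Q, (u ++ v).foldl δ (rep.foldl δ x) = ((rep ++ u) ++ v).foldl δ x := by
    intro x
    rw [foldl_app δ (rep ++ u) v, foldl_app δ rep u, foldl_app δ u v]
  calc (u ++ v).foldl δ p = (u ++ v).foldl δ (rep.foldl δ p') := by rw [hp]
    _ = ((rep ++ u) ++ v).foldl δ p' := e p'
    _ = ((rep ++ u) ++ v).foldl δ q' := hv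
    _ = (u ++ v).foldl δ (rep.foldl δ q') := (e q').symm
    _ = (u ++ v).foldl δ q := by rw [hq]

lemma foldl_replicate (m : ℕ) (a : A) (x : Q) :
    (List.replicate m a).foldl δ x = (fun y => δ y a)^[m] x := by
  induction m generalizing x with
  | zero => rfl
  | succ k ih =>
    rw [List.replicate_succ, List.foldl_cons, ih, Function.iterate_succ_apply]

end Scaffold

section Main

variable {Q A : Type*} [Finite Q]

lemma iterate_factorial_fixed (g : Q → Q) {x : Q} (hx : x ∈ Function.periodicPts g) :
    g^[Nat.factorial (Nat.card Q)] x = x := by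
  have hpos : 0 < Function.minimalPeriod g x :=
    Function.minimalPeriod_pos_of_mem_periodicPts hx
  have hle : Function.minimalPeriod g x ≤ Nat.card Q := by
    have hinj : Set.InjOn (fun i => g^[i] x) (Set.Iio (Function.minimalPeriod g x)) :=
      Function.iterate_injOn_Iio_minimalPeriod
    have hinj' : Function.Injective
        (fun i : Fin (Function.minimalPeriod g x) => g^[(i : ℕ)] x) := by
      intro i j hij
      have := hinj (by simp [i.isLt]) (by simp [j.isLt]) hij
      exact Fin.ext this
    calc Function.minimalPeriod g x = Nat.card (Fin (Function.minimalPeriod g x)) := by simp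
      _ ≤ Nat.card Q := Nat.card_le_card_of_injective _ hinj'
  have hdvd : Function.minimalPeriod g x ∣ Nat.factorial (Nat.card Q) :=
    Nat.dvd_factorial hpos hle
  exact Function.isPeriodicPt_iff_minimalPeriod_dvd.mpr hdvd

lemma periodic_of_injective {g : Q → Q} (hg : Function.Injective g) (x : Q) :
    x ∈ Function.periodicPts g := by
  obtain ⟨i, j, hne, hij⟩ := Finite.exists_ne_map_eq_of_infinite (fun i : ℕ => g^[i] x)
  rcases Nat.lt_or_ge i j with h | h
  · have hgi : Function.Injective g^[i] := Function.Injective.iterate hg i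
    have : g^[i] (g^[j - i] x) = g^[i] x := by
      rw [← Function.iterate_add_apply]
      have e : i + (j - i) = j := by omega
      rw [e]
      exact hij.symm
    exact ⟨j - i, by omega, hgi this⟩
  · have hlt : j < i := by omega
    have hgj : Function.Injective g^[j] := Function.Injective.iterate hg j
    have : g^[j] (g^[i - j] x) = g^[j] x := by
      rw [← Function.iterate_add_apply]
      have e : j + (i - j) = i := by omega
      rw [e]
      exact hij
    exact ⟨i - j, by omega, hgj this⟩

variable (δ : Q → A → Q) (a₀ : A) (p₀ : Q)

lemma periodic_eq
    (hcyc : Nat.card (Function.periodicPts fun q => δ q a₀) = Nat.card Q - 1)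
    (hp₀ : p₀ ∉ Function.periodicPts fun q => δ q a₀) :
    Function.periodicPts (fun q => δ q a₀) = {x | x ≠ p₀} := by
  set f := fun q => δ q a₀ with hf
  have hsub : Function.periodicPts f ⊆ {x | x ≠ p₀} := by
    intro x hx
    simp only [Set.mem_setOf_eq]
    rintro rfl
    exact hp₀ hx
  have h1 : (Function.periodicPts f).ncard = Nat.card Q - 1 := by
    rw [← Nat.card_coe_set_eq]; exact hcyc
  have h2 : ({x | x ≠ p₀} : Set Q).ncard = Nat.card Q - 1 := by
    have e : ({x | x ≠ p₀} : Set Q) = {p₀}ᶜ := by ext x; simp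
    rw [e]
    have := Set.ncard_add_ncard_compl ({p₀} : Set Q) (Set.toFinite _) (Set.toFinite _)
    have hs : ({p₀} : Set Q).ncard = 1 := Set.ncard_singleton p₀
    have hu : (Set.univ : Set Q).ncard = Nat.card Q := by
      rw [← Nat.card_coe_set_eq]
      exact Nat.card_congr (Equiv.Set.univ Q)
    omega
  exact (Set.eq_of_subset_of_ncard_le hsub (by omega) (Set.toFinite _))

end Main


section StatSection
open Finset
/-- Existence of a positive stationary vector for the uniform chain over a finite
set `D` of transformations acting transitively (in the reachability sense). -/
lemma exists_stationary {Q : Type*} [Fintype Q] [DecidableEq Q] [Nonempty Q]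
    (D : Finset (Q → Q)) (hD : D.Nonempty)
    (hconn : ∀ x y : Q, ∃ l : List (Q → Q), (∀ g ∈ l, g ∈ D) ∧ l.foldl (fun s g => g s) x = y) :
    ∃ π : Q → ℚ, (∀ x, 0 < π x) ∧
      (∀ q : Q, ∑ x, ((D.filter fun d => d x = q).card : ℚ) * π x = (D.card : ℚ) * π q) := by
  classical
  set M : Matrix Q Q ℚ := Matrix.of fun x q => ((D.filter fun d => d x = q).card : ℚ) with hM
  have rowsum : ∀ x : Q, ∑ q, M x q = (D.card : ℚ) := by
    intro x
    have : D.card = ∑ q ∈ (univ : Finset Q), (D.filter fun d => d x = q).card :=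
      Finset.card_eq_sum_card_fiberwise (fun d _ => mem_univ (d x))
    rw [hM]
    simp only [Matrix.of_apply]
    rw [← Nat.cast_sum]
    exact_mod_cast congrArg (Nat.cast : ℕ → ℚ) this.symm
  set N : Matrix Q Q ℚ := M - (D.card : ℚ) • (1 : Matrix Q Q ℚ) with hN
  have hmv : N.mulVec (fun _ => (1:ℚ)) = 0 := by
    funext x
    simp only [Matrix.mulVec, dotProduct, hN, Matrix.sub_apply, Matrix.smul_apply,
      Matrix.one_apply, smul_eq_mul, mul_one, Pi.zero_apply]
    rw [Finset.sum_sub_distrib]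
    rw [rowsum x]
    simp [Finset.sum_ite_eq' (univ : Finset Q) x (fun _ => (D.card : ℚ))]
  have hdet : N.det = 0 := by
    rw [← Matrix.exists_mulVec_eq_zero_iff]
    refine ⟨(fun _ => (1:ℚ)), ?_, hmv⟩
    intro h
    have := congrFun h (Classical.arbitrary Q)
    simp at this
  have hdetT : N.transpose.det = 0 := by rw [Matrix.det_transpose]; exact hdet
  obtain ⟨w, hw0, hww⟩ := Matrix.exists_mulVec_eq_zero_iff.mpr hdetT
  have hstatw : ∀ q : Q, ∑ x, M x q * w x = (D.card : ℚ) * w q := by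
    intro q
    have h0 := congrFun hww q
    simp only [Matrix.mulVec, dotProduct, Matrix.transpose_apply, hN, Matrix.sub_apply,
      Matrix.smul_apply, Matrix.one_apply, smul_eq_mul, Pi.zero_apply] at h0
    have e1 : ∀ x ∈ (univ : Finset Q),
        (M x q - (D.card : ℚ) * (if x = q then 1 else 0)) * w x
          = M x q * w x - (if x = q then (D.card : ℚ) * w x else 0) := by
      intro x _
      split_ifs <;> ring
    rw [Finset.sum_congr rfl e1, Finset.sum_sub_distrib,
      Finset.sum_ite_eq' (univ : Finset Q) q (fun x => (D.card : ℚ) * w x)] at h0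
    simp only [mem_univ, if_true] at h0
    linarith [h0]
  set π : Q → ℚ := fun q => |w q| with hπ
  have hMnn : ∀ x q : Q, 0 ≤ M x q := by
    intro x q; rw [hM]; simp only [Matrix.of_apply]; positivity
  have key1 : ∀ q : Q, (D.card : ℚ) * π q ≤ ∑ x, M x q * π x := by
    intro q
    have : (D.card : ℚ) * π q = |∑ x, M x q * w x| := by
      rw [hstatw q, abs_mul, hπ]
      congr 1
      simp [abs_of_nonneg, Nat.cast_nonneg]
    rw [this]
    refine le_trans (Finset.abs_sum_le_sum_abs _ _) ?_
    apply Finset.sum_le_sum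
    intro x _
    rw [abs_mul, abs_of_nonneg (hMnn x q)]
  have key2 : ∑ q, (∑ x, M x q * π x) = ∑ q, (D.card : ℚ) * π q := by
    rw [Finset.sum_comm]
    apply Finset.sum_congr rfl
    intro x _
    rw [← Finset.sum_mul, rowsum x, mul_comm]
  have keyeq : ∀ q : Q, ∑ x, M x q * π x = (D.card : ℚ) * π q := by
    by_contra hcon
    push_neg at hcon
    obtain ⟨q0, hq0⟩ := hcon
    have hlt : (D.card : ℚ) * π q0 < ∑ x, M x q0 * π x := lt_of_le_of_ne (key1 q0) (Ne.symm hq0)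
    have : ∑ q, (D.card : ℚ) * π q < ∑ q, (∑ x, M x q * π x) := by
      apply Finset.sum_lt_sum (fun q _ => key1 q) ⟨q0, mem_univ q0, hlt⟩
    rw [key2] at this
    exact lt_irrefl _ this
  -- positivity
  have hstep : ∀ x : Q, 0 < π x → ∀ d ∈ D, 0 < π (d x) := by
    intro x hx d hd
    have h1 : (1 : ℚ) ≤ M x (d x) := by
      rw [hM]
      simp only [Matrix.of_apply]
      have : d ∈ D.filter fun d' => d' x = d x := Finset.mem_filter.mpr ⟨hd, rfl⟩
      have hcard : 1 ≤ (D.filter fun d' => d' x = d x).card := Finset.card_pos.mpr ⟨d, this⟩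
      exact_mod_cast hcard
    have h2 : M x (d x) * π x ≤ ∑ y, M y (d x) * π y := by
      apply Finset.single_le_sum (f := fun y => M y (d x) * π y) ?_ (mem_univ x)
      intro y _
      have : 0 ≤ π y := by rw [hπ]; positivity
      exact mul_nonneg (hMnn y (d x)) this
    rw [keyeq (d x)] at h2
    have h3 : 0 < M x (d x) * π x := by
      apply mul_pos (lt_of_lt_of_le one_pos h1) hx
    have hDpos : (0:ℚ) < (D.card : ℚ) := by
      exact_mod_cast Finset.card_pos.mpr hD
    nlinarith [h2, h3, hDpos]
  have hx0 : ∃ x : Q, 0 < π x := by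
    by_contra hcon
    push_neg at hcon
    apply hw0
    funext x
    have h1 : π x ≤ 0 := hcon x
    have h2 : 0 ≤ π x := by rw [hπ]; positivity
    have : π x = 0 := le_antisymm h1 h2
    rw [hπ] at this
    simpa using abs_eq_zero.mp this
  obtain ⟨x0, hx0⟩ := hx0
  have hallpos : ∀ q : Q, 0 < π q := by
    intro q
    obtain ⟨l, hl, hfold⟩ := hconn x0 q

    subst hfold
    induction l generalizing x0 with
    | nil => exact hx0
    | cons g l ih =>
      simp only [List.foldl_cons]
      refine ih (g x0) ?_ (fun g' hg' => hl g' (List.mem_cons_of_mem g hg'))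
      exact hstep x0 hx0 g (hl g (List.mem_cons_self (a := g) (l := l)))
  refine ⟨π, hallpos, ?_⟩
  intro q
  have := keyeq q
  rw [hM] at this
  simpa using this


section CruxMachinery

variable {Q : Type*} [Fintype Q] [DecidableEq Q]

/-- mass of the fiber of `t` over `j` -/
def mass (π : Q → ℚ) (t : Q → Q) (j : Q) : ℚ := ∑ x, if t x = j then π x else 0

/-- second moment of the fiber masses -/
def pot (π : Q → ℚ) (t : Q → Q) : ℚ := ∑ j, (mass π t j)^2

lemma station_set (π : Q → ℚ) (D : Finset (Q → Q))
    (hstat : ∀ q : Q, ∑ x, ((D.filter fun d => d x = q).card : ℚ) * π x = (D.card : ℚ) * π q)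
    (t : Q → Q) (j : Q) :
    ∑ d ∈ D, mass π (fun x => t (d x)) j = (D.card : ℚ) * mass π t j := by
  have perx : ∀ x : Q, ∑ d ∈ D, (if t (d x) = j then π x else 0)
      = ∑ q, (if t q = j then ((D.filter fun d => d x = q).card : ℚ) * π x else 0) := by
    intro x
    have inner : ∀ d : Q → Q, (if t (d x) = j then π x else 0)
        = ∑ q, if d x = q then (if t q = j then π x else 0) else 0 := by
      intro d
      rw [Finset.sum_ite_eq (univ : Finset Q) (d x) (fun q => if t q = j then π x else 0)]
      simp
    rw [Finset.sum_congr rfl (fun d _ => inner d), Finset.sum_comm]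
    refine Finset.sum_congr rfl (fun q _ => ?_)
    rw [← Finset.sum_filter]
    rw [Finset.sum_const]
    by_cases h : t q = j <;> simp [h, mul_comm]
  calc ∑ d ∈ D, mass π (fun x => t (d x)) j
      = ∑ d ∈ D, ∑ x, (if t (d x) = j then π x else 0) := rfl
    _ = ∑ x, ∑ d ∈ D, (if t (d x) = j then π x else 0) := Finset.sum_comm
    _ = ∑ x, ∑ q, (if t q = j then ((D.filter fun d => d x = q).card : ℚ) * π x else 0) :=
        Finset.sum_congr rfl (fun x _ => perx x)
    _ = ∑ q, ∑ x, (if t q = j then ((D.filter fun d => d x = q).card : ℚ) * π x else 0) :=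
        Finset.sum_comm
    _ = ∑ q, (if t q = j then (D.card : ℚ) * π q else 0) := by
        refine Finset.sum_congr rfl (fun q _ => ?_)
        by_cases h : t q = j
        · simp only [h, if_true]
          exact hstat q
        · simp [h]
    _ = (D.card : ℚ) * mass π t j := by
        rw [mass, Finset.mul_sum]
        refine Finset.sum_congr rfl (fun q _ => ?_)
        by_cases h : t q = j <;> simp [h]

lemma jensen_step (π : Q → ℚ) (D : Finset (Q → Q))
    (hstat : ∀ q : Q, ∑ x, ((D.filter fun d => d x = q).card : ℚ) * π x = (D.card : ℚ) * π q)
    (t : Q → Q) (Mx : ℚ) (hM : pot π t = Mx)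
    (hle : ∀ d ∈ D, pot π (fun x => t (d x)) ≤ Mx) :
    ∀ d ∈ D, ∀ j, mass π (fun x => t (d x)) j = mass π t j := by
  have key : ∑ d ∈ D, ∑ j, (mass π (fun x => t (d x)) j - mass π t j)^2
      = (∑ d ∈ D, pot π (fun x => t (d x))) - (D.card : ℚ) * pot π t := by
    have expand : ∀ d ∈ D, ∑ j, (mass π (fun x => t (d x)) j - mass π t j)^2
        = pot π (fun x => t (d x))
          - 2 * ∑ j, mass π t j * mass π (fun x => t (d x)) j + pot π t := by
      intro d _
      rw [pot, pot, Finset.mul_sum, ← Finset.sum_sub_distrib, ← Finset.sum_add_distrib]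
      refine Finset.sum_congr rfl (fun j _ => by ring)
    rw [Finset.sum_congr rfl expand]
    rw [Finset.sum_add_distrib, Finset.sum_sub_distrib, Finset.sum_const]
    have cross : ∑ d ∈ D, ∑ j, mass π t j * mass π (fun x => t (d x)) j
        = (D.card : ℚ) * pot π t := by
      rw [Finset.sum_comm]
      have : ∀ j, ∑ d ∈ D, mass π t j * mass π (fun x => t (d x)) j
          = mass π t j * ((D.card : ℚ) * mass π t j) := by
        intro j
        rw [← Finset.mul_sum, station_set π D hstat t j]
      rw [Finset.sum_congr rfl (fun j _ => this j), pot, Finset.mul_sum]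
      refine Finset.sum_congr rfl (fun j _ => by ring)
    have e2 : ∑ d ∈ D, 2 * ∑ j, mass π t j * mass π (fun x => t (d x)) j
        = 2 * ((D.card : ℚ) * pot π t) := by
      rw [← Finset.mul_sum, cross]
    rw [e2, nsmul_eq_mul]
    ring
  have h2 : ∑ d ∈ D, pot π (fun x => t (d x)) ≤ (D.card : ℚ) * Mx := by
    have := Finset.sum_le_card_nsmul D (fun d => pot π (fun x => t (d x))) Mx
      (fun d hd => hle d hd)
    rwa [nsmul_eq_mul] at this
  have h1 : (0:ℚ) ≤ ∑ d ∈ D, ∑ j, (mass π (fun x => t (d x)) j - mass π t j)^2 := by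
    apply Finset.sum_nonneg
    intro d _
    apply Finset.sum_nonneg
    intro j _
    positivity
  have h0 : ∑ d ∈ D, ∑ j, (mass π (fun x => t (d x)) j - mass π t j)^2 = 0 := by
    have : ∑ d ∈ D, ∑ j, (mass π (fun x => t (d x)) j - mass π t j)^2 ≤ 0 := by
      rw [key, hM]
      linarith [h2]
    linarith [h1, this]
  intro d hd j
  have hz : ∀ d ∈ D, ∑ j, (mass π (fun x => t (d x)) j - mass π t j)^2 = 0 := by
    rw [Finset.sum_eq_zero_iff_of_nonneg] at h0
    · exact h0
    · intro d _
      apply Finset.sum_nonneg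
      intro j _
      positivity
  have hzz := hz d hd
  rw [Finset.sum_eq_zero_iff_of_nonneg (fun j _ => by positivity)] at hzz
  have := hzz j (mem_univ j)
  have := pow_eq_zero_iff (n := 2) (by norm_num) |>.mp this
  linarith [this]

end CruxMachinery

section CruxMain

lemma crux_main {Q A : Type*} [Finite Q] (δ : Q → A → Q) (a₀ : A) (p₀ : Q)
    (hper : ∀ x : Q, x ≠ p₀ → (fun q => δ q a₀)^[Nat.factorial (Nat.card Q)] x = x)
    (hsc : ∀ p q : Q, ∃ u : List A, u.foldl δ p = q) :
    Stable δ p₀ ((fun q => δ q a₀)^[Nat.factorial (Nat.card Q)] p₀) := by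
  classical
  letI : DecidableEq Q := Classical.decEq Q
  letI : Fintype Q := Fintype.ofFinite Q
  haveI : Nonempty Q := ⟨p₀⟩
  set f : Q → Q := fun q => δ q a₀ with hf
  set K := Nat.factorial (Nat.card Q) with hK
  set q₁ : Q := f^[K] p₀ with hq₁
  -- the finite set of letter transformations
  set D : Finset (Q → Q) := Finset.univ.filter (fun t => ∃ a : A, (fun q => δ q a) = t) with hD
  have hmemD : ∀ a : A, (fun q => δ q a) ∈ D := by
    intro a
    rw [hD, Finset.mem_filter]
    exact ⟨mem_univ _, a, rfl⟩
  have hDne : D.Nonempty := ⟨f, hmemD a₀⟩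
  -- connectivity
  have hlist : ∀ (u : List A) (x : Q),
      (u.map (fun a => fun q => δ q a)).foldl (fun s g => g s) x = u.foldl δ x := by
    intro u
    induction u with
    | nil => intro x; rfl
    | cons a u ih => intro x; simp only [List.map_cons, List.foldl_cons]; exact ih (δ x a)
  have hconn : ∀ x y : Q, ∃ l : List (Q → Q), (∀ g ∈ l, g ∈ D) ∧
      l.foldl (fun s g => g s) x = y := by
    intro x y
    obtain ⟨u, hu⟩ := hsc x y
    refine ⟨u.map (fun a => fun q => δ q a), ?_, by rw [hlist u x]; exact hu⟩
    intro g hg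
    obtain ⟨a, _, ha⟩ := List.mem_map.mp hg
    rw [← ha]
    exact hmemD a
  obtain ⟨π, hπpos, hπstat⟩ := exists_stationary (Q := Q) D hDne hconn
  -- the maximal element
  set S : Finset (Q → Q) := Finset.univ.filter (fun t => ∃ u : List A, (fun x => u.foldl δ x) = t)
    with hS
  have hSne : S.Nonempty := ⟨id, by
    rw [hS, Finset.mem_filter]
    exact ⟨mem_univ _, [], rfl⟩⟩
  obtain ⟨th, hthS, hthmax⟩ := Finset.exists_max_image S (pot π) hSne
  obtain ⟨wh, hwh⟩ := (Finset.mem_filter.mp hthS).2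
  -- rigidity
  have hrepr : ∀ u : List A, (fun x => (u ++ wh).foldl δ x) ∈ S := by
    intro u
    rw [hS, Finset.mem_filter]
    exact ⟨mem_univ _, u ++ wh, rfl⟩
  have rig : ∀ u : List A, (∀ j, mass π (fun x => (u ++ wh).foldl δ x) j = mass π th j) ∧
      pot π (fun x => (u ++ wh).foldl δ x) = pot π th := by
    intro u
    induction u with
    | nil =>
      constructor
      · intro j; rw [show (fun x => ([] ++ wh : List A).foldl δ x) = th from by
          funext x; simp only [List.nil_append]; exact congrFun hwh x]
      · rw [show (fun x => ([] ++ wh : List A).foldl δ x) = th from by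
          funext x; simp only [List.nil_append]; exact congrFun hwh x]
    | cons a u ih =>
      have he : (fun x => ((a :: u) ++ wh).foldl δ x)
          = fun x => (fun y => (u ++ wh).foldl δ y) (δ x a) := by
        funext x
        simp only [List.cons_append, List.foldl_cons]
      have hstep := jensen_step π D hπstat (fun x => (u ++ wh).foldl δ x) (pot π th) ih.2
        (fun d hd => by
          obtain ⟨a', ha'⟩ := (Finset.mem_filter.mp hd).2
          have : (fun x => (fun y => (u ++ wh).foldl δ y) (d x))
              = fun x => ((a' :: (u ++ wh)).foldl δ x) := by
            funext x
            simp only [List.foldl_cons]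
            rw [← ha']
          rw [this]
          have : (fun x => ((a' :: (u ++ wh)).foldl δ x)) ∈ S := by
            rw [hS, Finset.mem_filter]
            exact ⟨mem_univ _, a' :: (u ++ wh), rfl⟩
          exact hthmax _ this)
      have hda : (fun q => δ q a) ∈ D := hmemD a
      constructor
      · intro j
        rw [he]
        rw [hstep (fun q => δ q a) hda j]
        exact ih.1 j
      · rw [he]
        show (∑ j, (mass π (fun x => (fun y => (u ++ wh).foldl δ y) (δ x a)) j)^2) = ∑ j, (mass π th j)^2
        refine Finset.sum_congr rfl (fun j _ => ?_)
        rw [hstep (fun q => δ q a) hda j, ih.1 j]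
  -- telescope: conclude Stable
  intro u
  refine ⟨wh, ?_⟩
  set t : Q → Q := fun x => (u ++ wh).foldl δ x with ht
  have rigk : ∀ (k : ℕ) (j : Q), mass π (fun x => t (f^[k] x)) j = mass π th j := by
    intro k j
    have he : (fun x => t (f^[k] x))
        = fun x => (((List.replicate k a₀) ++ u) ++ wh).foldl δ x := by
      funext x
      rw [List.append_assoc, foldl_app δ (List.replicate k a₀) (u ++ wh) x,
        foldl_replicate δ k a₀ x]
    rw [he]
    exact (rig ((List.replicate k a₀) ++ u)).1 j
  -- split the mass at p₀
  have split : ∀ (k : ℕ) (j : Q), mass π (fun x => t (f^[k] x)) j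
      = (∑ x, if x ≠ p₀ ∧ t (f^[k] x) = j then π x else 0)
        + (if t (f^[k] p₀) = j then π p₀ else 0) := by
    intro k j
    show (∑ x, if t (f^[k] x) = j then π x else 0) = _
    have hsplit : ∀ x : Q, (if t (f^[k] x) = j then π x else 0)
        = (if x ≠ p₀ ∧ t (f^[k] x) = j then π x else 0)
          + (if x = p₀ ∧ t (f^[k] x) = j then π x else 0) := by
      intro x
      by_cases hx : x = p₀ <;> by_cases hc : t (f^[k] x) = j <;> simp [hx, hc]
    rw [Finset.sum_congr rfl (fun x _ => hsplit x), Finset.sum_add_distrib]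
    congr 1
    rw [Finset.sum_eq_single p₀]
    · simp
    · intro b _ hb
      simp [hb]
    · intro h
      exact absurd (mem_univ p₀) h
  have key : ∀ (k : ℕ) (j : Q),
      (∑ x, if x ≠ p₀ ∧ t (f^[k] x) = j then π x else 0)
        + (if t (f^[k] p₀) = j then π p₀ else 0)
      = (∑ x, if x ≠ p₀ ∧ t (f^[0] x) = j then π x else 0)
        + (if t (f^[0] p₀) = j then π p₀ else 0) := by
    intro k j
    rw [← split k j, ← split 0 j, rigk k j, rigk 0 j]
  have hψK : ∀ j : Q, (∑ x, if x ≠ p₀ ∧ t (f^[K] x) = j then π x else 0)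
      = (∑ x, if x ≠ p₀ ∧ t (f^[0] x) = j then π x else 0) := by
    intro j
    refine Finset.sum_congr rfl (fun x _ => ?_)
    by_cases hx : x = p₀
    · simp [hx]
    · rw [hper x hx]
      simp only [Function.iterate_zero, id_eq]
      rfl
  have final : ∀ j : Q, (if t q₁ = j then π p₀ else 0) = (if t p₀ = j then π p₀ else 0) := by
    intro j
    have h1 := key K j
    rw [hψK j] at h1
    have h2 : (if t (f^[K] p₀) = j then π p₀ else 0) = (if t (f^[0] p₀) = j then π p₀ else 0) := by
      linarith [h1]
    rw [← hq₁] at h2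
    exact h2
  have heq : t q₁ = t p₀ := by
    have h := final (t p₀)
    simp only [if_pos rfl] at h
    by_cases hc : t q₁ = t p₀
    · exact hc
    · rw [if_neg hc] at h
      exact absurd h.symm (ne_of_gt (hπpos p₀))
  exact heq.symm

end CruxMain

end StatSection

theorem stmt_11 {Q A : Type*} [Finite Q] (δ : Q → A → Q) (a₀ : A) (p₀ : Q)
    (hperm : ∀ a : A, a ≠ a₀ → Function.Bijective fun q => δ q a)
    (hcyc : Nat.card (Function.periodicPts fun q => δ q a₀) = Nat.card Q - 1)
    (hp₀ : p₀ ∉ Function.periodicPts fun q => δ q a₀)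
    (hsc : ∀ p q : Q, ∃ u : List A, u.foldl δ p = q) :
    (∀ (a : A) (q : Q), ∃ p : Q, Stable δ (δ p a) q) ∧
      (∀ (a : A) (p q : Q), Stable δ (δ p a) (δ q a) → Stable δ p q) ∧
      (∀ p q : Q, ∃ u : List A, Stable δ (u.foldl δ p) q) := by
  classical
  set f : Q → Q := fun q => δ q a₀ with hf
  set n := Nat.card Q with hn
  set K := Nat.factorial n with hKdef
  have hK : 0 < K := Nat.factorial_pos n
  have hper0 : Function.periodicPts f = {x | x ≠ p₀} := periodic_eq δ a₀ p₀ hcyc hp₀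
  -- every x ≠ p₀ is fixed by f^[K]
  have hper : ∀ x : Q, x ≠ p₀ → f^[K] x = x := by
    intro x hx
    exact iterate_factorial_fixed f (by rw [hper0]; exact hx)
  -- p₀ is not in the image of f
  have him : ∀ y : Q, f y ≠ p₀ := by
    intro y hy
    by_cases hyp : y = p₀
    · rw [hyp] at hy
      have : p₀ ∈ Function.periodicPts f := ⟨1, one_pos, hy⟩
      rw [hper0] at this
      exact this rfl
    · have h1 : f^[K] y = y := hper y hyp
      have : p₀ ∈ Function.periodicPts f := by
        refine ⟨K, hK, ?_⟩
        show f^[K] p₀ = p₀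
        calc f^[K] p₀ = f^[K] (f y) := by rw [hy]
          _ = f (f^[K] y) := (Function.iterate_succ_apply' f K y ▸
              Function.iterate_succ_apply f K y ▸ rfl)
          _ = f y := by rw [h1]
          _ = p₀ := hy
      rw [hper0] at this
      exact this rfl
  set q₁ : Q := f^[K] p₀ with hq₁def
  have hq₁ : q₁ ≠ p₀ := by
    have : q₁ = f (f^[K - 1] p₀) := by
      rw [hq₁def, ← Function.iterate_succ_apply' f (K - 1) p₀]
      congr 1
      omega
    rw [this]
    exact him _
  -- the replicate word for a₀
  set rep : List A := List.replicate (K - 1) a₀ with hrepdef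
  have hrep : ∀ x : Q, rep.foldl δ (δ x a₀) = f^[K] x := by
    intro x
    rw [hrepdef, foldl_replicate]
    show f^[K-1] (f x) = f^[K] x
    rw [← Function.iterate_succ_apply f (K - 1) x]
    congr 1
    omega
  have hrep_ne : ∀ x : Q, x ≠ p₀ → rep.foldl δ (δ x a₀) = x := by
    intro x hx; rw [hrep]; exact hper x hx
  have hrep_p₀ : rep.foldl δ (δ p₀ a₀) = q₁ := hrep p₀
  -- replicate word for other letters
  have hrepa : ∀ a : A, a ≠ a₀ → ∀ x : Q, (List.replicate (K - 1) a).foldl δ (δ x a) = x := by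
    intro a ha x
    rw [foldl_replicate]
    show (fun y => δ y a)^[K-1] (δ x a) = x
    have : (fun y => δ y a)^[K-1] (δ x a) = (fun y => δ y a)^[K] x := by
      rw [← Function.iterate_succ_apply (fun y => δ y a) (K - 1) x]
      congr 1
      omega
    rw [this]
    exact iterate_factorial_fixed _ (periodic_of_injective (hperm a ha).injective x)
  -- THE CRUX
  have hstab : Stable δ p₀ q₁ := crux_main δ a₀ p₀ hper hsc
  refine ⟨?_, ?_, ?_⟩
  · -- surjectivity on classes
    intro a q
    by_cases ha : a = a₀
    · rw [ha]
      by_cases hq : q = p₀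
      · rw [hq]
        refine ⟨f^[K - 1] p₀, ?_⟩
        have : δ (f^[K-1] p₀) a₀ = q₁ := by
          show f (f^[K-1] p₀) = q₁
          rw [← Function.iterate_succ_apply' f (K - 1) p₀, hq₁def]
          congr 1
          omega
        rw [this]
        exact stable_symm δ hstab
      · refine ⟨f^[K - 1] q, ?_⟩
        have : δ (f^[K-1] q) a₀ = q := by
          show f (f^[K-1] q) = q
          rw [← Function.iterate_succ_apply' f (K - 1) q]
          have e : (K - 1).succ = K := by omega
          rw [e]
          exact hper q hq
        rw [this]
        exact stable_refl δ q
    · obtain ⟨p, hp⟩ := (hperm a ha).surjective q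
      refine ⟨p, ?_⟩
      simp only at hp
      rw [hp]
      exact stable_refl δ q
  · -- injectivity on classes
    intro a p q h
    by_cases ha : a = a₀
    · rw [ha] at h
      by_cases hp : p = p₀ <;> by_cases hq : q = p₀
      · rw [hp, hq]; exact stable_refl δ p₀
      · rw [hp] at h ⊢
        have h1 : Stable δ q₁ q := stable_cancel δ rep hrep_p₀ (hrep_ne q hq) h
        exact stable_trans δ hstab h1
      · rw [hq] at h ⊢
        have h1 : Stable δ p q₁ := stable_cancel δ rep (hrep_ne p hp) hrep_p₀ h
        exact stable_trans δ h1 (stable_symm δ hstab)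
      · exact stable_cancel δ rep (hrep_ne p hp) (hrep_ne q hq) h
    · exact stable_cancel δ (List.replicate (K-1) a) (hrepa a ha p) (hrepa a ha q) h
  · -- strong connectivity of the factor
    intro p q
    obtain ⟨u, hu⟩ := hsc p q
    exact ⟨u, hu ▸ stable_refl δ q⟩
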